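/- Let (X,d) be a complete separable metric space, f: X → ℝ a Lipschitz function, and γ: [0,1] → X a Lipschitz curve. Then |f(γ_1) − f(γ_0)| ≤ ∫₀¹ lip_a(f)(γ_t) |γ̇_t| dt. -/

import Mathlib

open MeasureTheory Filter Metric Set Topology ENNReal

noncomputable section

/-- The space `C([0,1]; X)` of continuous curves in a metric space `X`. -/
abbrev Curve (X : Type*) [MetricSpace X] := C(Set.Icc (0:ℝ) 1, X)

/-- Projection of `ℝ` onto `[0,1]`. -/
def proj01 (t : ℝ) : Set.Icc (0:ℝ) 1 := Set.projIcc 0 1 zero_le_one t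

variable {X : Type*} [MetricSpace X]

instance : MeasurableSpace (Curve X) := borel _
instance : BorelSpace (Curve X) := ⟨rfl⟩

/-- Evaluation at the right endpoint, `e₊(γ) = γ₁`. -/
def ePos (γ : Curve X) : X := γ ⟨1, by norm_num⟩

/-- Evaluation at the left endpoint, `e₋(γ) = γ₀`. -/
def eNeg (γ : Curve X) : X := γ ⟨0, by norm_num⟩

/-- A curve is Lipschitz if it admits some Lipschitz constant. -/
def IsLipCurve (γ : Curve X) : Prop := ∃ K : NNReal, LipschitzWith K γ

/-- `γ` has metric speed `v` at time `t`:
`v = lim_{h → 0} d(γ_{t+h}, γ_t)/|h|`. -/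
def HasSpeedAt (γ : Curve X) (t : ℝ) (v : ℝ) : Prop :=
  Tendsto (fun h : ℝ => dist (γ (proj01 (t + h))) (γ (proj01 t)) / |h|) (nhdsWithin 0 {0}ᶜ) (nhds v)

open Classical in
/-- The metric speed `|γ̇_t|` of a curve (junk value `0` where the defining limit does not exist). -/
def speed (γ : Curve X) (t : ℝ) : ℝ := if h : ∃ v, HasSpeedAt γ t v then h.choose else 0

/-- The length `ℓ(γ) = ∫₀¹ |γ̇_t| dt` of a curve. -/
def curveLen (γ : Curve X) : ℝ := ∫ t in (0:ℝ)..1, speed γ t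

/-- A curve has constant speed if `|γ̇_t| = ℓ(γ)` for a.e. `t ∈ [0,1]`. -/
def HasConstSpeed (γ : Curve X) : Prop :=
  ∀ᵐ t ∂(volume.restrict (Set.Icc (0:ℝ) 1)), speed γ t = curveLen γ

/-- The curvilinear integral `∫₀¹ f(γ_t) |γ̇_t| dt`, as an extended real number. -/
def curveIntE (f : X → ℝ) (γ : Curve X) : ℝ≥0∞ :=
  ∫⁻ t in Set.Icc (0:ℝ) 1, ENNReal.ofReal (f (γ (proj01 t)) * speed γ t)

variable [MeasurableSpace X]

/-- `b ∈ L^q(μ)` is the barycenter of the plan `π`: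
`∫ f b dμ = ∫∫₀¹ f(γ_t)|γ̇_t| dt dπ(γ)` for all continuous nonnegative `f ∈ L^p(μ)`. -/
def IsBarycenter (μ : Measure X) (p : ℝ) (π : Measure (Curve X)) (b : X → ℝ) : Prop :=
  (∀ᵐ x ∂μ, 0 ≤ b x) ∧
  ∀ f : X → ℝ, Continuous f → MemLp f (ENNReal.ofReal p) μ → (∀ x, 0 ≤ f x) →
    ENNReal.ofReal (∫ x, f x * b x ∂μ) = ∫⁻ γ, curveIntE f γ ∂π

/-- `π ∈ B_q(X,μ)` : a finite plan concentrated on Lipschitz curves, with barycenter in `L^q(μ)`,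
whose endpoint marginals are absolutely continuous with respect to `μ` with density in `L^q(μ)`. -/
def IsPlanBq (μ : Measure X) (p : ℝ) (q : ℝ≥0∞) (π : Measure (Curve X)) : Prop :=
  IsFiniteMeasure π ∧
  π {γ | ¬ IsLipCurve γ} = 0 ∧
  (∃ b : X → ℝ, MemLp b q μ ∧ IsBarycenter μ p π b) ∧
  (π.map ePos ≪ μ ∧ MemLp (fun x => ((π.map ePos).rnDeriv μ x).toReal) q μ) ∧
  (π.map eNeg ≪ μ ∧ MemLp (fun x => ((π.map eNeg).rnDeriv μ x).toReal) q μ)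

/-- `∫ f d∂π = ∫ f d(e₊)_#π − ∫ f d(e₋)_#π`. -/
def planBoundaryInt (π : Measure (Curve X)) (f : X → ℝ) : ℝ :=
  (∫ γ, f (ePos γ) ∂π) - ∫ γ, f (eNeg γ) ∂π

/-- `G` is a `p`-weak upper gradient of `f` in the sense of plans with barycenter:
`G ≥ 0`, `G ∈ L^p(μ)` and `∫ f d∂π ≤ ∫ G Bar(π) dμ` for every `π ∈ B_q(X,μ)`. -/
def IsWeakUpperGradient (μ : Measure X) (p : ℝ) (q : ℝ≥0∞) (f G : X → ℝ) : Prop :=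
  (∀ᵐ x ∂μ, 0 ≤ G x) ∧ MemLp G (ENNReal.ofReal p) μ ∧
  ∀ π : Measure (Curve X), IsPlanBq μ p q π → ∀ b : X → ℝ,
    MemLp b q μ → IsBarycenter μ p π b →
    planBoundaryInt π f ≤ ∫ x, G x * b x ∂μ

/-- Membership in the Sobolev space `W^{1,p}(X,μ)` defined via plans with barycenter. -/
def MemW1p (μ : Measure X) (p : ℝ) (q : ℝ≥0∞) (f : X → ℝ) : Prop :=
  MemLp f (ENNReal.ofReal p) μ ∧ ∃ G : X → ℝ, IsWeakUpperGradient μ p q f G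

/-- `G` is the minimal `p`-weak upper gradient `|Df|_{p,w}` of `f`. -/
def IsMinWeakUpperGradient (μ : Measure X) (p : ℝ) (q : ℝ≥0∞) (f G : X → ℝ) : Prop :=
  IsWeakUpperGradient μ p q f G ∧
  ∀ G' : X → ℝ, IsWeakUpperGradient μ p q f G' → ∀ᵐ x ∂μ, G x ≤ G' x

/-- The (smallest) Lipschitz constant of `f` restricted to `s`. -/
def lipConstOn (f : X → ℝ) (s : Set X) : ℝ :=
  sInf {K : ℝ | 0 ≤ K ∧ ∀ x ∈ s, ∀ y ∈ s, |f x - f y| ≤ K * dist x y}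

/-- The asymptotic slope `lip_a(f)(x) = inf_{r>0} Lip(f; B_r(x))`. -/
def asympSlope (f : X → ℝ) (x : X) : ℝ :=
  sInf {L : ℝ | ∃ r : ℝ, 0 < r ∧ L = lipConstOn f (Metric.ball x r)}

/-- `(1/p) ∫ g^p dμ` as an extended real number. -/
def pEnergy (μ : Measure X) (p : ℝ) (g : X → ℝ) : ℝ≥0∞ :=
  ENNReal.ofReal (1/p) * ∫⁻ x, ENNReal.ofReal (g x ^ p) ∂μ

/-- Weak convergence `f_n ⇀ f` in `L^p(μ)`: testing against every `g ∈ L^q(μ)`. -/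
def WeakLpTendsto (μ : Measure X) (p : ℝ) (F : ℕ → X → ℝ) (f : X → ℝ) : Prop :=
  ∀ g : X → ℝ, MemLp g (ENNReal.ofReal (p/(p-1))) μ →
    Tendsto (fun n => ∫ x, F n x * g x ∂μ) atTop (nhds (∫ x, f x * g x ∂μ))

/-- The Cheeger `p`-energy, obtained by relaxation of `(1/p)∫ lip_a(·)^p dμ`
over Lipschitz functions in `L^p(μ)`. -/
def cheegerEnergy (μ : Measure X) (p : ℝ) (f : X → ℝ) : ℝ≥0∞ :=
  sInf {E : ℝ≥0∞ | ∃ F : ℕ → X → ℝ,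
    (∀ n, (∃ K : NNReal, LipschitzWith K (F n)) ∧ MemLp (F n) (ENNReal.ofReal p) μ) ∧
    WeakLpTendsto μ p F f ∧
    E = atTop.liminf fun n => pEnergy μ p (asympSlope (F n))}

/-- Membership in the Sobolev space `H^{1,p}(X,μ)` defined via relaxation. -/
def MemH1p (μ : Measure X) (p : ℝ) (f : X → ℝ) : Prop :=
  MemLp f (ENNReal.ofReal p) μ ∧ cheegerEnergy μ p f ≠ ⊤

/-- `g` is the minimal `p`-relaxed slope `|Df|_p` of `f`:
the nonnegative function in `L^p(μ)` with `Ch_p(f) = (1/p)∫ g^p dμ`. -/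
def IsMinRelaxedSlope (μ : Measure X) (p : ℝ) (f g : X → ℝ) : Prop :=
  (∀ᵐ x ∂μ, 0 ≤ g x) ∧ MemLp g (ENNReal.ofReal p) μ ∧
    cheegerEnergy μ p f = pEnergy μ p g

end

lemma abs_deriv_le_lip {φ : ℝ → ℝ} {K : NNReal} (hφ : LipschitzWith K φ) (t : ℝ) :
    |deriv φ t| ≤ K := by
  by_cases h : DifferentiableAt ℝ φ t
  · have h1 : HasDerivAt φ (deriv φ t) t := h.hasDerivAt
    rw [hasDerivAt_iff_tendsto_slope] at h1
    refine le_of_tendsto h1.abs ?_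
    filter_upwards [self_mem_nhdsWithin] with s hs
    have hst : s ≠ t := hs
    rw [slope_def_field, abs_div, div_le_iff₀ (abs_pos.2 (sub_ne_zero.2 hst))]
    calc |φ s - φ t| = dist (φ s) (φ t) := by rw [Real.dist_eq]
    _ ≤ K * dist s t := hφ.dist_le_mul s t
    _ = K * |s - t| := by rw [Real.dist_eq]
  · rw [deriv_zero_of_not_differentiableAt h]
    simpa using K.2

lemma intervalIntegrable_of_bounded {φ : ℝ → ℝ} {C : ℝ} (hm : Measurable φ)
    (hb : ∀ t, |φ t| ≤ C) (a b : ℝ) : IntervalIntegrable φ volume a b := by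
  rw [intervalIntegrable_iff]
  refine Measure.integrableOn_of_bounded ?_ hm.aestronglyMeasurable
    (ae_of_all _ fun t => by simpa [Real.norm_eq_abs] using hb t)
  rw [Set.uIoc]; exact measure_Ioc_lt_top.ne

lemma mono_integral_deriv_le {g : ℝ → ℝ} (hg : Monotone g) (hc : Continuous g)
    {a b : ℝ} (hab : a ≤ b) : ∫ t in a..b, deriv g t ≤ g b - g a := by
  have hae := hg.ae_hasDerivAt
  set μ := hg.stieltjesFunction.measure with hμ
  have hsf : ∀ x, hg.stieltjesFunction x = g x := by
    intro x
    rw [hg.stieltjesFunction_eq]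
    exact rightLim_eq_of_tendsto
      ((hc.tendsto x).mono_left nhdsWithin_le_nhds)
  have h1 : ∫ t in a..b, deriv g t = ∫ t in a..b, (μ.rnDeriv volume t).toReal := by
    refine intervalIntegral.integral_congr_ae ?_
    filter_upwards [hae] with t ht using fun _ => ht.deriv
  have hfin : μ (Set.Ioc a b) ≠ ∞ := by
    rw [hg.stieltjesFunction.measure_Ioc]; exact ofReal_ne_top
  rw [h1, intervalIntegral.integral_of_le hab]
  calc ∫ t in Set.Ioc a b, (μ.rnDeriv volume t).toReal
      ≤ (μ (Set.Ioc a b)).toReal := Measure.setIntegral_toReal_rnDeriv_le hfin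
    _ = g b - g a := by
        rw [hg.stieltjesFunction.measure_Ioc, hsf, hsf,
          toReal_ofReal (sub_nonneg.2 (hg hab))]

lemma lip_sub_le_integral_deriv {φ : ℝ → ℝ} {K : NNReal} (hφ : LipschitzWith K φ)
    {a b : ℝ} (hab : a ≤ b) : φ b - φ a ≤ ∫ t in a..b, deriv φ t := by
  set g : ℝ → ℝ := fun t => K * t - φ t with hgdef
  have hgm : Monotone g := by
    intro s t hst
    have := hφ.dist_le_mul s t
    rw [Real.dist_eq, Real.dist_eq] at this
    have h2 : φ t - φ s ≤ K * (t - s) := by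
      have h3 : |s - t| = t - s := by rw [abs_sub_comm]; exact abs_of_nonneg (by linarith)
      calc φ t - φ s ≤ |φ t - φ s| := le_abs_self _
      _ = |φ s - φ t| := (abs_sub_comm _ _)
      _ ≤ K * |s - t| := this
      _ = K * (t - s) := by rw [h3]
    simp only [hgdef]; nlinarith
  have hgc : Continuous g := (continuous_const.mul continuous_id).sub hφ.continuous
  have hint : IntervalIntegrable (deriv φ) volume a b :=
    intervalIntegrable_of_bounded (measurable_deriv φ) (abs_deriv_le_lip hφ) a b
  have hder : ∀ᵐ t, deriv g t = K - deriv φ t := by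
    filter_upwards [hφ.ae_differentiableAt_of_real] with t ht
    have : HasDerivAt g ((K : ℝ) * 1 - deriv φ t) t :=
      ((hasDerivAt_id t).const_mul (K : ℝ)).sub ht.hasDerivAt
    simpa using this.deriv
  have h1 : ∫ t in a..b, deriv g t = ∫ t in a..b, ((K : ℝ) - deriv φ t) := by
    refine intervalIntegral.integral_congr_ae ?_
    filter_upwards [hder] with t ht using fun _ => ht
  have h2 := mono_integral_deriv_le hgm hgc hab
  rw [h1, intervalIntegral.integral_sub intervalIntegrable_const hint,
    intervalIntegral.integral_const] at h2
  simp only [hgdef, smul_eq_mul] at h2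
  nlinarith [h2]

lemma ae_hasDerivAt_integral {m : ℝ → ℝ} {K : ℝ} (hm : Measurable m)
    (h0 : ∀ t, 0 ≤ m t) (hK : ∀ t, m t ≤ K) :
    ∀ᵐ t, HasDerivAt (fun u => ∫ s in (0:ℝ)..u, m s) (m t) t := by
  set F : ℝ → ℝ := fun u => ∫ s in (0:ℝ)..u, m s with hF
  have habs : ∀ t, |m t| ≤ K := fun t => by rw [abs_of_nonneg (h0 t)]; exact hK t
  have hint : ∀ a b : ℝ, IntervalIntegrable m volume a b :=
    intervalIntegrable_of_bounded hm habs
  have hdiff : ∀ a b : ℝ, F b - F a = ∫ s in a..b, m s := by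
    intro a b
    rw [hF]
    simp only
    rw [← intervalIntegral.integral_add_adjacent_intervals (hint 0 a) (hint a b)]
    ring
  have hmono : Monotone F := by
    intro a b hab
    have := hdiff a b
    have h2 : 0 ≤ ∫ s in a..b, m s :=
      intervalIntegral.integral_nonneg hab fun u _ => h0 u
    linarith
  have hmeq : hmono.stieltjesFunction.measure
      = volume.withDensity (fun s => ENNReal.ofReal (m s)) := by
    refine Measure.ext_of_Ioc' _ _ (fun a b _ => ?_) (fun a b hab => ?_)
    · rw [hmono.stieltjesFunction.measure_Ioc]; exact ofReal_ne_top
    · rw [hmono.stieltjesFunction.measure_Ioc,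
        withDensity_apply _ measurableSet_Ioc]
      have hsf : ∀ x, hmono.stieltjesFunction x = F x := by
        intro x
        rw [hmono.stieltjesFunction_eq]
        have hK0 : (0:ℝ) ≤ K := le_trans (h0 0) (hK 0)
        have key : ∀ a b : ℝ, b ≤ a → |F a - F b| ≤ K * (a - b) := by
          intro a b h
          rw [hdiff b a]
          calc |∫ s in b..a, m s| ≤ ∫ s in b..a, |m s| :=
                intervalIntegral.abs_integral_le_integral_abs h
          _ ≤ ∫ _s in b..a, K :=
                intervalIntegral.integral_mono_on h (hint b a).abs
                  intervalIntegrable_const (fun u _ => habs u)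
          _ = K * (a - b) := by rw [intervalIntegral.integral_const, smul_eq_mul]; ring
        have hc : Continuous F := by
          have : LipschitzWith (Real.toNNReal K) F := by
            refine LipschitzWith.of_dist_le_mul fun a b => ?_
            rw [Real.dist_eq, Real.dist_eq, Real.coe_toNNReal _ hK0]
            rcases le_total b a with h | h
            · rw [abs_of_nonneg (by linarith : (0:ℝ) ≤ a - b)]
              exact key a b h
            · rw [abs_of_nonpos (by linarith : a - b ≤ 0), abs_sub_comm]
              have := key b a h
              linarith [this]
          exact this.continuous
        exact rightLim_eq_of_tendsto
          ((hc.tendsto x).mono_left nhdsWithin_le_nhds)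
      rw [hsf, hsf, hdiff a b, intervalIntegral.integral_of_le hab.le,
        ← ofReal_integral_eq_lintegral_ofReal ((hint a b).1) (ae_of_all _ h0)]
  have hrn : (fun s => ENNReal.ofReal (m s)) =ᵐ[volume]
      hmono.stieltjesFunction.measure.rnDeriv volume := by
    rw [hmeq]
    exact (Measure.rnDeriv_withDensity volume (hm.ennreal_ofReal)).symm
  filter_upwards [hmono.ae_hasDerivAt, hrn] with t ht h2
  rw [← h2, toReal_ofReal (h0 t)] at ht
  exact ht

lemma HasSpeedAt.speed_eq {X : Type*} [MetricSpace X] {γ : Curve X} {t v : ℝ} (h : HasSpeedAt γ t v) :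
    speed γ t = v := by
  have hex : ∃ v, HasSpeedAt γ t v := ⟨v, h⟩
  rw [speed, dif_pos hex]
  exact tendsto_nhds_unique hex.choose_spec h

lemma slope_tendsto_of_hasDerivAt {F : ℝ → ℝ} {t v : ℝ} (h : HasDerivAt F v t) :
    Tendsto (fun h : ℝ => (F (t + h) - F t) / h) (nhdsWithin 0 {0}ᶜ) (nhds v) := by
  have he : Tendsto (fun h : ℝ => t + h) (nhdsWithin 0 {(0:ℝ)}ᶜ) (nhdsWithin t {t}ᶜ) := by
    refine tendsto_nhdsWithin_of_tendsto_nhds_of_eventually_within _ ?_ ?_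
    · have : Tendsto (fun h : ℝ => t + h) (nhds 0) (nhds (t + 0)) :=
        (continuous_add_left t).tendsto 0
      simpa using this.mono_left nhdsWithin_le_nhds
    · filter_upwards [self_mem_nhdsWithin] with h hh
      simp only [Set.mem_compl_iff, Set.mem_singleton_iff] at hh ⊢
      intro hc; exact hh (by linarith)
  have := (hasDerivAt_iff_tendsto_slope.1 h).comp he
  refine this.congr fun h => ?_
  simp only [Function.comp_apply, slope_def_field]
  ring_nf

lemma exists_ae_speed {X : Type*} [MetricSpace X] [TopologicalSpace.SeparableSpace X]
    (γ : Curve X) {K : NNReal} (hγ : LipschitzWith K ⇑γ) :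
    ∀ᵐ t : ℝ, HasSpeedAt γ t (speed γ t) ∧ 0 ≤ speed γ t := by
  have hXne : Nonempty X := ⟨γ (proj01 0)⟩
  set c : ℝ → X := fun t => γ (proj01 t) with hc_def
  have hc : LipschitzWith K c := by
    have := hγ.comp (LipschitzWith.projIcc (zero_le_one (α := ℝ)))
    rw [mul_one] at this; exact this
  obtain ⟨u, hu⟩ := TopologicalSpace.exists_dense_seq X
  set φ : ℕ → ℝ → ℝ := fun n t => dist (c t) (u n) with hφ_def
  have hφ : ∀ n, LipschitzWith K (φ n) := fun n => by
    have := (LipschitzWith.dist_left (u n)).comp hc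
    rw [one_mul] at this; exact this
  set m : ℝ → ℝ := fun t => ⨆ n, |deriv (φ n) t| with hm_def
  have hbdd : ∀ t, BddAbove (Set.range fun n => |deriv (φ n) t|) := fun t =>
    ⟨K, by rintro x ⟨n, rfl⟩; exact abs_deriv_le_lip (hφ n) t⟩
  have hm0 : ∀ t, 0 ≤ m t := fun t =>
    le_trans (abs_nonneg _) (le_ciSup (hbdd t) 0)
  have hmK : ∀ t, m t ≤ K := fun t => ciSup_le fun n => abs_deriv_le_lip (hφ n) t
  have hmmeas : Measurable m :=
    Measurable.iSup fun n => (measurable_deriv (φ n)).abs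
  have hmabs : ∀ t, |m t| ≤ K := fun t => by
    rw [abs_of_nonneg (hm0 t)]; exact hmK t
  have hderiv_le : ∀ n t, deriv (φ n) t ≤ m t := fun n t =>
    le_trans (le_abs_self _) (le_ciSup (hbdd t) n)
  set F : ℝ → ℝ := fun v => ∫ s in (0:ℝ)..v, m s with hF_def
  have hFdiff : ∀ a b : ℝ, F b - F a = ∫ s in a..b, m s := by
    intro a b
    rw [hF_def]
    simp only
    rw [← intervalIntegral.integral_add_adjacent_intervals
      (intervalIntegrable_of_bounded hmmeas hmabs 0 a)
      (intervalIntegrable_of_bounded hmmeas hmabs a b)]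
    ring
  have key : ∀ a b : ℝ, a ≤ b → dist (c b) (c a) ≤ F b - F a := by
    intro a b hab
    refine le_of_forall_pos_le_add fun ε hε => ?_
    obtain ⟨n, hn⟩ := hu.exists_dist_lt (c a) (half_pos hε)
    have h1 : dist (c b) (c a) ≤ φ n b - φ n a + ε := by
      have t1 : dist (c b) (c a) ≤ φ n b + dist (c a) (u n) := by
        rw [hφ_def]
        simpa [dist_comm] using dist_triangle (c b) (u n) (c a)
      have t2 : φ n a = dist (c a) (u n) := rfl
      nlinarith [hn]
    have h2 : φ n b - φ n a ≤ ∫ s in a..b, deriv (φ n) s :=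
      lip_sub_le_integral_deriv (hφ n) hab
    have h3 : ∫ s in a..b, deriv (φ n) s ≤ ∫ s in a..b, m s :=
      intervalIntegral.integral_mono_on hab
        (intervalIntegrable_of_bounded (measurable_deriv _)
          (fun t => abs_deriv_le_lip (hφ n) t) a b)
        (intervalIntegrable_of_bounded hmmeas hmabs a b)
        (fun s _ => hderiv_le n s)
    rw [hFdiff a b] at *
    linarith
  filter_upwards [ae_hasDerivAt_integral hmmeas hm0 hmK,
    ae_all_iff.2 fun n => (hφ n).ae_differentiableAt_of_real] with t hFt hd
  have hQdef : ∀ h : ℝ, dist (γ (proj01 (t + h))) (γ (proj01 t)) = dist (c (t + h)) (c t) := fun h => rfl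
  -- upper function
  have hU : Tendsto (fun h : ℝ => |F (t + h) - F t| / |h|) (nhdsWithin 0 {0}ᶜ) (nhds (m t)) := by
    have := (slope_tendsto_of_hasDerivAt hFt).abs
    rw [abs_of_nonneg (hm0 t)] at this
    refine this.congr fun h => ?_
    rw [abs_div]
  have hQle : ∀ h : ℝ, dist (c (t + h)) (c t) / |h| ≤ |F (t + h) - F t| / |h| := by
    intro h
    rcases eq_or_ne h 0 with rfl | hne
    · simp
    have hpos : 0 < |h| := abs_pos.2 hne
    rw [div_le_div_iff_of_pos_right hpos]
    rcases le_total 0 h with hh | hh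
    · have := key t (t + h) (by linarith)
      exact this.trans (le_abs_self _)
    · have := key (t + h) t (by linarith)
      rw [dist_comm] at this
      calc dist (c (t + h)) (c t) ≤ F t - F (t + h) := this
      _ ≤ |F (t + h) - F t| := by rw [abs_sub_comm]; exact le_abs_self _
  -- lower functions
  have hL : ∀ n : ℕ, Tendsto (fun h : ℝ => |φ n (t + h) - φ n t| / |h|)
      (nhdsWithin 0 {0}ᶜ) (nhds |deriv (φ n) t|) := by
    intro n
    have := (slope_tendsto_of_hasDerivAt (hd n).hasDerivAt).abs
    refine this.congr fun h => ?_
    rw [abs_div]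
  have hLle : ∀ (n : ℕ) (h : ℝ), |φ n (t + h) - φ n t| / |h| ≤ dist (c (t + h)) (c t) / |h| := by
    intro n h
    rcases eq_or_ne h 0 with rfl | hne
    · simp
    rw [div_le_div_iff_of_pos_right (abs_pos.2 hne)]
    exact abs_dist_sub_le (c (t + h)) (c t) (u n)
  have hspeed : HasSpeedAt γ t (m t) := by
    rw [HasSpeedAt]
    rw [Metric.tendsto_nhds]
    intro ε hε
    have evU : ∀ᶠ h : ℝ in nhdsWithin 0 {0}ᶜ, |F (t + h) - F t| / |h| < m t + ε :=
      hU.eventually_lt_const (by linarith)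
    obtain ⟨n, hn⟩ : ∃ n, m t - ε / 2 < |deriv (φ n) t| := by
      rcases lt_or_ge (m t - ε / 2) 0 with hneg | hpos
      · exact ⟨0, lt_of_lt_of_le hneg (abs_nonneg _)⟩
      · exact exists_lt_of_lt_ciSup (by rw [hm_def]; simp only; linarith [hε])
    have evL : ∀ᶠ h : ℝ in nhdsWithin 0 {0}ᶜ,
        m t - ε < |φ n (t + h) - φ n t| / |h| :=
      (hL n).eventually_const_lt (by linarith)
    filter_upwards [evU, evL] with h h1 h2
    rw [hQdef h, Real.dist_eq, abs_sub_lt_iff]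
    constructor
    · have := hQle h
      linarith
    · have := hLle n h
      linarith
  refine ⟨?_, ?_⟩
  · rwa [hspeed.speed_eq]
  · rw [hspeed.speed_eq]; exact hm0 t

lemma lipConstOn_spec {X : Type*} [MetricSpace X] {f : X → ℝ} {Kf : NNReal} (hf : LipschitzWith Kf f) (s : Set X) :
    0 ≤ lipConstOn f s ∧ ∀ x ∈ s, ∀ y ∈ s, |f x - f y| ≤ lipConstOn f s * dist x y := by
  set S := {K : ℝ | 0 ≤ K ∧ ∀ x ∈ s, ∀ y ∈ s, |f x - f y| ≤ K * dist x y} with hS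
  have hmem : (Kf : ℝ) ∈ S := by
    refine ⟨Kf.2, fun x _ y _ => ?_⟩
    rw [← Real.dist_eq]
    exact hf.dist_le_mul x y
  have hne : S.Nonempty := ⟨_, hmem⟩
  have hbd : BddBelow S := ⟨0, fun K hK => hK.1⟩
  have h0 : 0 ≤ lipConstOn f s := le_csInf hne fun K hK => hK.1
  refine ⟨h0, fun x hx y hy => ?_⟩
  rcases eq_or_ne x y with rfl | hxy
  · simp
  have hd : 0 < dist x y := dist_pos.2 hxy
  rw [← div_le_iff₀ hd]
  exact le_csInf hne fun K hK => (div_le_iff₀ hd).2 (hK.2 x hx y hy)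

/-- **Upper-gradient inequality for the asymptotic slope.**
If `f : X → ℝ` is Lipschitz and `γ : [0,1] → X` is a Lipschitz curve in a complete separable
metric space, then `|f(γ₁) − f(γ₀)| ≤ ∫₀¹ lip_a(f)(γ_t) |γ̇_t| dt`. -/
theorem abs_sub_le_integral_asympSlope {X : Type*} [MetricSpace X] [CompleteSpace X]
    [TopologicalSpace.SeparableSpace X]
    (f : X → ℝ) (hf : ∃ K : NNReal, LipschitzWith K f)
    (γ : Curve X) (hγ : IsLipCurve γ) :
    ENNReal.ofReal (|f (ePos γ) - f (eNeg γ)|) ≤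
      ∫⁻ t in Set.Icc (0:ℝ) 1, ENNReal.ofReal (asympSlope f (γ (proj01 t)) * speed γ t) := by
  obtain ⟨Kf, hfK⟩ := hf
  obtain ⟨Kγ, hγK⟩ := hγ
  set c : ℝ → X := fun t => γ (proj01 t) with hc_def
  have hc : LipschitzWith Kγ c := by
    have := hγK.comp (LipschitzWith.projIcc (zero_le_one (α := ℝ)))
    rw [mul_one] at this; exact this
  set g : ℝ → ℝ := fun t => f (c t) with hg_def
  have hg : LipschitzWith (Kf * Kγ) g := hfK.comp hc
  -- pointwise a.e. bound
  have h_ae : ∀ᵐ t : ℝ, |deriv g t| ≤ asympSlope f (c t) * speed γ t := by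
    filter_upwards [exists_ae_speed γ hγK, hg.ae_differentiableAt_of_real] with t hsp hd
    obtain ⟨hs, hv0⟩ := hsp
    set v := speed γ t
    have hQ : Tendsto (fun h : ℝ => dist (c (t + h)) (c t) / |h|)
        (nhdsWithin 0 {0}ᶜ) (nhds v) := hs
    have hg' : Tendsto (fun h : ℝ => |g (t + h) - g t| / |h|)
        (nhdsWithin 0 {0}ᶜ) (nhds |deriv g t|) := by
      have := (slope_tendsto_of_hasDerivAt hd.hasDerivAt).abs
      refine this.congr fun h => ?_
      rw [abs_div]
    have hbound : ∀ r : ℝ, 0 < r →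
        |deriv g t| ≤ lipConstOn f (Metric.ball (c t) r) * v := by
      intro r hr
      set L := lipConstOn f (Metric.ball (c t) r)
      have hcc : Tendsto (fun h : ℝ => c (t + h)) (nhds 0) (nhds (c t)) := by
        have h1 : Tendsto (fun h : ℝ => t + h) (nhds 0) (nhds (t + 0)) :=
          (continuous_add_left t).tendsto 0
        rw [add_zero] at h1
        exact (hc.continuous.tendsto t).comp h1
      have hev : ∀ᶠ h : ℝ in nhdsWithin 0 {0}ᶜ,
          |g (t + h) - g t| / |h| ≤ L * (dist (c (t + h)) (c t) / |h|) := by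
        have hev0 : ∀ᶠ h : ℝ in nhds 0, dist (c (t + h)) (c t) < r := by
          have := Metric.tendsto_nhds.1 hcc r hr
          exact this
        filter_upwards [eventually_nhdsWithin_of_eventually_nhds hev0,
          self_mem_nhdsWithin] with h hdist hne
        have hne' : h ≠ 0 := hne
        have hmem1 : c (t + h) ∈ Metric.ball (c t) r := by
          rw [Metric.mem_ball]; exact hdist
        have hmem2 : c t ∈ Metric.ball (c t) r := Metric.mem_ball_self hr
        have hfb : |g (t + h) - g t| ≤ L * dist (c (t + h)) (c t) :=
          (lipConstOn_spec hfK _).2 _ hmem1 _ hmem2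
        rw [mul_div_assoc'] at *
        exact div_le_div_of_nonneg_right hfb (abs_pos.2 hne').le |>.trans (le_of_eq rfl)
      exact le_of_tendsto_of_tendsto hg' (hQ.const_mul L) hev
    rcases hv0.eq_or_lt with hv | hv
    · have := hbound 1 one_pos
      rw [← hv] at this ⊢
      simpa using this
    · rw [← div_le_iff₀ hv]
      refine le_csInf ⟨lipConstOn f (Metric.ball (c t) 1), 1, one_pos, rfl⟩ ?_
      rintro L ⟨r, hr, rfl⟩
      rw [div_le_iff₀ hv]
      exact hbound r hr
  -- integrability and measurability
  have habs : ∀ t, |deriv g t| ≤ (Kf * Kγ : NNReal) := abs_deriv_le_lip hg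
  have hintd : IntervalIntegrable (deriv g) volume 0 1 :=
    intervalIntegrable_of_bounded (measurable_deriv g) habs 0 1
  have hinta : IntervalIntegrable (fun t => |deriv g t|) volume 0 1 :=
    intervalIntegrable_of_bounded ((measurable_deriv g).abs)
      (fun t => by rw [abs_abs]; exact habs t) 0 1
  -- step 1 : |g 1 - g 0| ≤ ∫₀¹ |deriv g|
  have step1 : |g 1 - g 0| ≤ ∫ t in (0:ℝ)..1, |deriv g t| := by
    have hup : g 1 - g 0 ≤ ∫ t in (0:ℝ)..1, deriv g t :=
      lip_sub_le_integral_deriv hg zero_le_one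
    have hup2 : ∫ t in (0:ℝ)..1, deriv g t ≤ ∫ t in (0:ℝ)..1, |deriv g t| :=
      intervalIntegral.integral_mono_on zero_le_one hintd hinta
        fun s _ => le_abs_self _
    have hdn : -(g 1 - g 0) ≤ ∫ t in (0:ℝ)..1, |deriv g t| := by
      have hng : LipschitzWith (Kf * Kγ) (fun t => -g t) := hg.neg
      have h1 : (-g 1) - (-g 0) ≤ ∫ t in (0:ℝ)..1, deriv (fun s => -g s) t :=
        lip_sub_le_integral_deriv hng zero_le_one
      have h2 : ∫ t in (0:ℝ)..1, deriv (fun s => -g s) t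
          ≤ ∫ t in (0:ℝ)..1, |deriv g t| := by
        refine intervalIntegral.integral_mono_on zero_le_one ?_ hinta fun s _ => ?_
        · refine intervalIntegrable_of_bounded (C := (Kf * Kγ : NNReal)) (measurable_deriv _) (fun t => ?_) 0 1
          rw [deriv.fun_neg, abs_neg]; exact habs t
        · rw [deriv.fun_neg]
          exact neg_le_abs _
      linarith
    rw [abs_le]
    constructor <;> linarith
  -- endpoints
  have hePos : f (ePos γ) = g 1 := by
    have : proj01 (1:ℝ) = ⟨1, by norm_num⟩ := by
      apply Subtype.ext
      simp [proj01, Set.projIcc]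
    rw [hg_def]; simp only [hc_def, this]; rfl
  have heNeg : f (eNeg γ) = g 0 := by
    have : proj01 (0:ℝ) = ⟨0, by norm_num⟩ := by
      apply Subtype.ext
      simp [proj01, Set.projIcc]
    rw [hg_def]; simp only [hc_def, this]; rfl
  rw [hePos, heNeg]
  calc ENNReal.ofReal |g 1 - g 0| ≤ ENNReal.ofReal (∫ t in (0:ℝ)..1, |deriv g t|) :=
        ofReal_le_ofReal step1
  _ = ∫⁻ t in Set.Ioc (0:ℝ) 1, ENNReal.ofReal |deriv g t| := by
        rw [intervalIntegral.integral_of_le zero_le_one,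
          ofReal_integral_eq_lintegral_ofReal hinta.1 (ae_of_all _ fun t => abs_nonneg _)]
  _ ≤ ∫⁻ t in Set.Icc (0:ℝ) 1, ENNReal.ofReal |deriv g t| :=
        lintegral_mono_set Set.Ioc_subset_Icc_self
  _ ≤ ∫⁻ t in Set.Icc (0:ℝ) 1, ENNReal.ofReal (asympSlope f (γ (proj01 t)) * speed γ t) := by
        refine lintegral_mono_ae ?_
        filter_upwards [ae_restrict_of_ae h_ae] with t ht
        exact ofReal_le_ofReal ht
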